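/- Let $X_1, \ldots, X_n$ be i.i.d. real random variables with common distribution $m$ having CDF $F$. Then $\mathbb{E}\left[W_1\left(m, \frac{1}{n}\sum_{k=1}^n \delta_{X_k}\right)\right] \leq \frac{1}{\sqrt{n}}\int_{\mathbb{R}} \sqrt{F(x)(1-F(x))}\,dx$. -/

import Mathlib

open MeasureTheory Set
open scoped ENNReal

/-- The cumulative distribution function of a measure on `ℝ`. -/
noncomputable def cdfOf (m : Measure ℝ) (x : ℝ) : ℝ := (m (Iic x)).toReal

/-- Wasserstein-1 distance as the `L¹` distance between the CDFs
(here expressed in `ℝ≥0∞` so that it may be infinite). -/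
noncomputable def W1e (m m' : Measure ℝ) : ℝ≥0∞ :=
  ∫⁻ x, ENNReal.ofReal |cdfOf m x - cdfOf m' x|

/-- Empirical measure of a sample `X₁(ω), …, Xₙ(ω)`. -/
noncomputable def empMeasure (n : ℕ) (X : Fin n → ℝ) : Measure ℝ :=
  ((n : ℝ≥0∞)⁻¹) • ∑ k : Fin n, Measure.dirac (X k)

open ProbabilityTheory

lemma emp_cdf (n : ℕ) (Y : Fin n → ℝ) (x : ℝ) :
    cdfOf (empMeasure n Y) x = (n:ℝ)⁻¹ * ∑ k, if Y k ≤ x then (1:ℝ) else 0 := by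
  unfold cdfOf empMeasure
  rw [Measure.smul_apply, Measure.finset_sum_apply]
  simp only [Measure.dirac_apply' _ measurableSet_Iic, Set.indicator_apply, mem_Iic,
    smul_eq_mul, ENNReal.toReal_mul, ENNReal.toReal_inv, ENNReal.toReal_natCast]
  rw [ENNReal.toReal_sum]
  · congr 1
    refine Finset.sum_congr rfl fun k _ => ?_
    split <;> simp
  · intro k _; split <;> simp

lemma aux_pointwise {Ω : Type*} [MeasurableSpace Ω] (P : Measure Ω) [IsProbabilityMeasure P]
    (m : Measure ℝ) [IsProbabilityMeasure m] (n : ℕ) (hn : 1 ≤ n)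
    (X : Fin n → Ω → ℝ) (hmeas : ∀ k, Measurable (X k))
    (hindep : ProbabilityTheory.iIndepFun X P)
    (hid : ∀ k, Measure.map (X k) P = m) (x : ℝ) :
    ∫⁻ ω, ENNReal.ofReal |cdfOf m x - (n:ℝ)⁻¹ * ∑ k, if X k ω ≤ x then (1:ℝ) else 0| ∂P
      ≤ ENNReal.ofReal (Real.sqrt (cdfOf m x * (1 - cdfOf m x) / n)) := by
  set p : ℝ := cdfOf m x with hp
  have hp0 : 0 ≤ p := ENNReal.toReal_nonneg
  have hp1 : p ≤ 1 := by
    have : m (Iic x) ≤ 1 := prob_le_one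
    simpa [hp, cdfOf] using ENNReal.toReal_mono ENNReal.one_ne_top this
  have hpp : 0 ≤ p * (1 - p) := mul_nonneg hp0 (by linarith)
  have hnpos : (0:ℝ) < n := by exact_mod_cast hn
  -- the indicator variables
  set Z : Fin n → Ω → ℝ := fun k => (X k ⁻¹' Iic x).indicator 1 with hZ
  have hsmeas : ∀ k, MeasurableSet (X k ⁻¹' Iic x) := fun k => (hmeas k) measurableSet_Iic
  have hZmeas : ∀ k, Measurable (Z k) := fun k => measurable_const.indicator (hsmeas k)
  have hZmem : ∀ k, MemLp (Z k) 2 P := fun k => (memLp_const (1:ℝ)).indicator (hsmeas k)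
  have hZsq : ∀ k, Z k ^ 2 = Z k := by
    intro k; funext ω
    by_cases h : ω ∈ X k ⁻¹' Iic x <;> simp [hZ, Set.indicator_apply, h]
  have hEZ : ∀ k, ∫ ω, Z k ω ∂P = p := by
    intro k
    rw [hZ]
    rw [integral_indicator_one (hsmeas k)]
    rw [hp, cdfOf, ← hid k, Measure.map_apply (hmeas k) measurableSet_Iic]
    rfl
  have hVarZ : ∀ k, variance (Z k) P = p * (1 - p) := by
    intro k
    rw [variance_eq_sub (hZmem k)]
    have : ∫ ω, (Z k ^ 2) ω ∂P = p := by rw [hZsq k]; exact hEZ k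
    rw [this, hEZ k]; ring
  -- the sum
  set S : Ω → ℝ := ∑ k : Fin n, Z k with hS
  have hSmem : MemLp S 2 P := memLp_finset_sum' _ fun k _ => hZmem k
  have hVarS : variance S P = n * (p * (1 - p)) := by
    rw [hS, IndepFun.variance_sum (fun k _ => hZmem k) ?_]
    · simp [hVarZ, Finset.card_univ, mul_comm]
    · intro i _ j _ hij
      have h1 : IndepFun (X i) (X j) P := hindep.indepFun hij
      have : IndepFun ((Iic x).indicator (1 : ℝ → ℝ) ∘ X i)
          ((Iic x).indicator (1 : ℝ → ℝ) ∘ X j) P :=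
        h1.comp (measurable_const.indicator measurableSet_Iic)
          (measurable_const.indicator measurableSet_Iic)
      convert this using 1 <;>
        · funext ω; simp [hZ, Set.indicator_apply, Function.comp, Set.indicator]
  have hSapp : ∀ ω, S ω = ∑ k, Z k ω := fun ω => by simp [hS]
  have hES : ∫ ω, S ω ∂P = n * p := by
    simp only [hSapp]
    rw [integral_finset_sum _ fun k _ => (hZmem k).integrable one_le_two]
    simp [hEZ, Finset.card_univ]
  -- Fn
  set Fn : Ω → ℝ := (n:ℝ)⁻¹ • S with hFn
  have hFnmem : MemLp Fn 2 P := hSmem.const_smul _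
  have hEFn : ∫ ω, Fn ω ∂P = p := by
    rw [hFn]
    simp only [Pi.smul_apply, smul_eq_mul]
    rw [integral_const_mul, hES]
    field_simp
  have hVarFn : variance Fn P = p * (1 - p) / n := by
    rw [hFn, variance_smul, hVarS]
    field_simp
  -- second moment of Y = p - Fn
  set Y : Ω → ℝ := fun ω => p - Fn ω with hY
  have hYmem : MemLp Y 2 P := (memLp_const p).sub hFnmem
  have hEY2 : ∫ ω, (Y ω) ^ 2 ∂P = p * (1 - p) / n := by
    have h1 := variance_eq_integral hFnmem.aemeasurable
    rw [hVarFn] at h1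
    rw [h1]
    symm
    apply integral_congr_ae; filter_upwards with ω
    simp only [hY, Pi.pow_apply, Pi.sub_apply, hEFn]
    ring
  -- now the Cauchy–Schwarz step
  have hSmeas : Measurable S := by
    have : S = fun ω => ∑ k, Z k ω := by funext ω; simp [hS]
    rw [this]
    exact Finset.measurable_sum _ fun k _ => hZmeas k
  have hYmeas : Measurable Y := measurable_const.sub (hSmeas.const_smul ((n:ℝ)⁻¹))
  set f : Ω → ℝ≥0∞ := fun ω => ENNReal.ofReal |Y ω| with hf
  have hfmeas : Measurable f := hYmeas.abs.ennreal_ofReal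
  have key : ∫⁻ ω, f ω ∂P ≤ (∫⁻ ω, f ω ^ (2:ℝ) ∂P) ^ (1/(2:ℝ)) := by
    have hconj : Real.HolderConjugate 2 2 := Real.HolderConjugate.two_two
    set g : Ω → ℝ≥0∞ := fun _ => 1 with hg
    have hgmeas : AEMeasurable g P := aemeasurable_const
    calc ∫⁻ ω, f ω ∂P = ∫⁻ ω, (f * g) ω ∂P := by
          simp [hg, Pi.mul_apply]
      _ ≤ (∫⁻ ω, f ω ^ (2:ℝ) ∂P) ^ (1/(2:ℝ)) * (∫⁻ ω, g ω ^ (2:ℝ) ∂P) ^ (1/(2:ℝ)) :=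
          ENNReal.lintegral_mul_le_Lp_mul_Lq P hconj hfmeas.aemeasurable hgmeas
      _ = (∫⁻ ω, f ω ^ (2:ℝ) ∂P) ^ (1/(2:ℝ)) := by simp [hg]
  have hf2 : ∫⁻ ω, f ω ^ (2:ℝ) ∂P = ENNReal.ofReal (p * (1 - p) / n) := by
    have h1 : ∀ ω, f ω ^ (2:ℝ) = ENNReal.ofReal ((Y ω) ^ 2) := by
      intro ω
      rw [hf, ENNReal.ofReal_rpow_of_nonneg (abs_nonneg _) (by norm_num)]
      rw [Real.rpow_two, sq_abs]
    simp only [h1]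
    rw [← ofReal_integral_eq_lintegral_ofReal]
    · rw [hEY2]
    · exact hYmem.integrable_sq
    · filter_upwards with ω using sq_nonneg _
  have goal_eq : (∫⁻ ω, ENNReal.ofReal |cdfOf m x - (n:ℝ)⁻¹ * ∑ k, if X k ω ≤ x then (1:ℝ) else 0| ∂P)
      = ∫⁻ ω, f ω ∂P := by
    apply lintegral_congr
    intro ω
    have hfn : Fn ω = (n:ℝ)⁻¹ * ∑ k, if X k ω ≤ x then (1:ℝ) else 0 := by
      simp only [hFn, Pi.smul_apply, smul_eq_mul, hSapp]
      have hzz : ∀ k : Fin n, Z k ω = if X k ω ≤ x then (1:ℝ) else 0 := by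
        intro k; by_cases h : X k ω ≤ x <;> simp [hZ, Set.indicator_apply, h]
      simp only [hzz]
    simp only [hf, hY, hfn, hp]
  rw [goal_eq]
  refine key.trans ?_
  rw [hf2]
  rw [ENNReal.ofReal_rpow_of_nonneg (by positivity) (by norm_num), ← Real.sqrt_eq_rpow]

theorem stmt3 {Ω : Type*} [MeasurableSpace Ω] (P : Measure Ω) [IsProbabilityMeasure P]
    (m : Measure ℝ) [IsProbabilityMeasure m] (n : ℕ) (hn : 1 ≤ n)
    (X : Fin n → Ω → ℝ) (hmeas : ∀ k, Measurable (X k))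
    (hindep : ProbabilityTheory.iIndepFun X P)
    (hid : ∀ k, Measure.map (X k) P = m) :
    (∫⁻ ω, W1e m (empMeasure n (fun k => X k ω)) ∂P) ≤
      ENNReal.ofReal (1 / Real.sqrt n) *
        ∫⁻ x, ENNReal.ofReal (Real.sqrt (cdfOf m x * (1 - cdfOf m x))) := by
  have hnpos : (0:ℝ) < n := by exact_mod_cast hn
  have hFmono : Monotone (cdfOf m) := by
    intro a b hab
    exact ENNReal.toReal_mono (measure_ne_top m _) (measure_mono (Iic_subset_Iic.2 hab))
  have hFmeas : Measurable (cdfOf m) := hFmono.measurable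
  -- rewrite the LHS
  have lhs_eq : (∫⁻ ω, W1e m (empMeasure n (fun k => X k ω)) ∂P) =
      ∫⁻ ω, (∫⁻ x, ENNReal.ofReal
        |cdfOf m x - (n:ℝ)⁻¹ * ∑ k, if X k ω ≤ x then (1:ℝ) else 0|) ∂P := by
    apply lintegral_congr; intro ω
    unfold W1e
    apply lintegral_congr; intro x
    rw [emp_cdf]
  rw [lhs_eq]
  -- joint measurability
  have hjoint : Measurable (Function.uncurry fun (ω : Ω) (x : ℝ) => ENNReal.ofReal
      |cdfOf m x - (n:ℝ)⁻¹ * ∑ k, if X k ω ≤ x then (1:ℝ) else 0|) := by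
    apply Measurable.ennreal_ofReal
    apply Measurable.abs
    apply Measurable.sub
    · exact hFmeas.comp measurable_snd
    · apply Measurable.const_mul
      apply Finset.measurable_sum
      intro k _
      have hset : MeasurableSet {q : Ω × ℝ | X k q.1 ≤ q.2} :=
        measurableSet_le ((hmeas k).comp measurable_fst) measurable_snd
      exact Measurable.ite hset measurable_const measurable_const
  rw [lintegral_lintegral_swap hjoint.aemeasurable]
  have step : ∀ x : ℝ,
      (∫⁻ ω, ENNReal.ofReal |cdfOf m x - (n:ℝ)⁻¹ * ∑ k, if X k ω ≤ x then (1:ℝ) else 0| ∂P)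
        ≤ ENNReal.ofReal (1 / Real.sqrt n) *
            ENNReal.ofReal (Real.sqrt (cdfOf m x * (1 - cdfOf m x))) := by
    intro x
    refine (aux_pointwise P m n hn X hmeas hindep hid x).trans (le_of_eq ?_)
    rw [← ENNReal.ofReal_mul (by positivity)]
    congr 1
    have hq0 : 0 ≤ cdfOf m x * (1 - cdfOf m x) := by
      have h0 : 0 ≤ cdfOf m x := ENNReal.toReal_nonneg
      have h1 : cdfOf m x ≤ 1 := by
        have : m (Iic x) ≤ 1 := prob_le_one
        simpa [cdfOf] using ENNReal.toReal_mono ENNReal.one_ne_top this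
      nlinarith
    rw [Real.sqrt_div hq0]
    field_simp
  calc ∫⁻ x, (∫⁻ ω, ENNReal.ofReal
        |cdfOf m x - (n:ℝ)⁻¹ * ∑ k, if X k ω ≤ x then (1:ℝ) else 0| ∂P)
      ≤ ∫⁻ x, ENNReal.ofReal (1 / Real.sqrt n) *
          ENNReal.ofReal (Real.sqrt (cdfOf m x * (1 - cdfOf m x))) :=
        lintegral_mono step
    _ = ENNReal.ofReal (1 / Real.sqrt n) *
          ∫⁻ x, ENNReal.ofReal (Real.sqrt (cdfOf m x * (1 - cdfOf m x))) :=
        lintegral_const_mul' _ _ ENNReal.ofReal_ne_top
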